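/- Let m ≥ 1, N ≥ 1, k ≥ 0 be integers and let P₀ : ℝ^N → ℂ be a homogeneous polynomial of degree k. Define ψ(y) = Σ_{j=0}^{⌊k/(2m)⌋} (1/j!) (i(-Δ)^m)^j P₀(y) (a finite sum, since (-Δ)^m lowers the degree by 2m). Then ψ is a polynomial eigenfunction of the adjoint rescaled operator: B* ψ ≡ -i(-Δ)^m ψ - (1/(2m)) (y·∇ψ) = -(k/(2m)) ψ on ℝ^N. In particular, for P₀(y) = y^β the polynomials ψ*_β(y) = (1/√(β!)) [ y^β + Σ_{j=1}^{⌊|β|/(2m)⌋} (1/j!) (i(-Δ)^m)^j y^β ] (the generalized Hermite polynomials) satisfy B* ψ*_β = -(|β|/(2m)) ψ*_β. -/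

import Mathlib

open MeasureTheory Filter Complex

noncomputable section

/-- `ℝ^N`. -/
abbrev Sp (N : ℕ) : Type := EuclideanSpace ℝ (Fin N)

/-- Partial derivative `∂/∂y_i`. -/
def pd {N : ℕ} (i : Fin N) (f : Sp N → ℂ) : Sp N → ℂ :=
  fun y => fderiv ℝ f y (EuclideanSpace.single i 1)

/-- The Laplacian `Δ = Σ_i ∂²/∂y_i²`. -/
def lap {N : ℕ} (f : Sp N → ℂ) : Sp N → ℂ :=
  fun y => ∑ i, pd i (pd i f) y

/-- The iterated negative Laplacian `(-Δ)^m`. -/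
def negLapPow {N : ℕ} (m : ℕ) (f : Sp N → ℂ) : Sp N → ℂ :=
  (fun g : Sp N → ℂ => fun y => -(lap g y))^[m] f

/-- The Euler operator `y · ∇`. -/
def euler {N : ℕ} (f : Sp N → ℂ) : Sp N → ℂ :=
  fun y => ∑ i, (y i : ℂ) * pd i f y

/-- The rescaled Schrödinger operator `B v = -i(-Δ)^m v + (1/2m) y·∇v + (N/2m) v`. -/
def Bop {N : ℕ} (m : ℕ) (f : Sp N → ℂ) : Sp N → ℂ :=
  fun y => -Complex.I * negLapPow m f y + (1/(2*(m:ℂ))) * euler f y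
    + ((N:ℂ)/(2*(m:ℂ))) * f y

/-- The adjoint rescaled operator `B* v = -i(-Δ)^m v - (1/2m) y·∇v`. -/
def Bstar {N : ℕ} (m : ℕ) (f : Sp N → ℂ) : Sp N → ℂ :=
  fun y => -Complex.I * negLapPow m f y - (1/(2*(m:ℂ))) * euler f y

/-- The multiindex derivative `D^β = ∂^{β₁}_{y₁} ⋯ ∂^{β_N}_{y_N}`. -/
def Dop {N : ℕ} (β : Fin N → ℕ) (f : Sp N → ℂ) : Sp N → ℂ :=
  ((List.ofFn fun i : Fin N => (pd i)^[β i]).foldr (· ∘ ·) id) f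

/-- The weighted Sobolev integrand `Σ_{k=0}^{2m} |D^k v(y)|² = Σ_{|β| ≤ 2m} |D^β v(y)|²`. -/
def sobSum {N : ℕ} (m : ℕ) (v : Sp N → ℂ) (y : Sp N) : ℝ :=
  ∑ k ∈ Finset.range (2*m+1), ∑ β ∈ Finset.Nat.antidiagonalTuple N k, ‖Dop β v y‖ ^ 2

/-- The weight `ρ(y) = exp(-|y|^α)`, `α = 2m/(2m-1)`. -/
def rho {N : ℕ} (m : ℕ) (y : Sp N) : ℝ :=
  Real.exp (-(‖y‖ ^ ((2*(m:ℝ))/(2*(m:ℝ)-1))))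

/-- The weight `ρ*(y) = exp(|y|^α)`, `α = 2m/(2m-1)`. -/
def rhoStar {N : ℕ} (m : ℕ) (y : Sp N) : ℝ :=
  Real.exp (‖y‖ ^ ((2*(m:ℝ))/(2*(m:ℝ)-1)))

/-- The operator `(i(-Δ)^m)^j`. -/
def iLapIter {N : ℕ} (m j : ℕ) (f : Sp N → ℂ) : Sp N → ℂ :=
  (fun g : Sp N → ℂ => fun y => Complex.I * negLapPow m g y)^[j] f

/-- The monomial `y^β`. -/
def monom {N : ℕ} (β : Fin N → ℕ) : Sp N → ℂ := fun y => ∏ i, (y i : ℂ) ^ (β i)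

namespace S8
open MvPolynomial

variable {N : ℕ}

def ev (p : MvPolynomial (Fin N) ℂ) : Sp N → ℂ :=
  fun y => MvPolynomial.eval (fun i => ((y i : ℝ) : ℂ)) p

def cproj (i : Fin N) : Sp N →L[ℝ] ℂ :=
  Complex.ofRealCLM.comp (PiLp.proj 2 _ i)

lemma cproj_apply (i : Fin N) (y : Sp N) : cproj i y = (y i : ℂ) := rfl

lemma ev_hasFDerivAt (p : MvPolynomial (Fin N) ℂ) (y : Sp N) :
    HasFDerivAt (ev p) (∑ j, ev (pderiv j p) y • cproj j) y := by
  induction p using MvPolynomial.induction_on with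
  | C a =>
      have hfun : ev (C a) = fun _ : Sp N => a := by funext z; simp [ev]
      have hz : (∑ j, ev (pderiv j (C a : MvPolynomial (Fin N) ℂ)) y • cproj j)
          = (0 : Sp N →L[ℝ] ℂ) := by
        refine Finset.sum_eq_zero fun j _ => ?_
        have : ev (pderiv j (C a : MvPolynomial (Fin N) ℂ)) y = 0 := by simp [pderiv_C, ev]
        ext v
        simp only [ContinuousLinearMap.smul_apply, ContinuousLinearMap.zero_apply, smul_eq_mul]
        rw [this, zero_mul]
      rw [hfun, hz]
      exact hasFDerivAt_const a y
  | add p q hp hq =>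
      have hfun : ev (p + q) = fun z => ev p z + ev q z := by funext z; simp [ev]
      have hz : (∑ j, ev (pderiv j (p + q)) y • cproj j)
          = (∑ j, ev (pderiv j p) y • cproj j) + (∑ j, ev (pderiv j q) y • cproj j) := by
        rw [← Finset.sum_add_distrib]
        refine Finset.sum_congr rfl fun j _ => ?_
        have : ev (pderiv j (p + q)) y = ev (pderiv j p) y + ev (pderiv j q) y := by
          simp [ev]
        ext v
        simp only [ContinuousLinearMap.smul_apply, ContinuousLinearMap.add_apply, smul_eq_mul]
        rw [this]
        exact add_mul _ _ _
      rw [hfun, hz]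
      exact hp.add hq
  | mul_X p j hp =>
      have hX : HasFDerivAt (fun z : Sp N => ((z j : ℝ) : ℂ)) (cproj j) y :=
        (cproj j).hasFDerivAt
      have h2 := hp.mul' hX
      have hfun : ev (p * X j) = fun z => ev p z * ((z j : ℝ) : ℂ) := by
        funext z; simp [ev]
      have key : ∀ i, ev ((pderiv i) (p * X j)) y
          = (if j = i then ev p y else 0) + (y j : ℂ) * ev (pderiv i p) y := by
        intro i
        simp only [Derivation.leibniz, pderiv_X, smul_eq_mul, ev, map_add, eval_mul, eval_X,
          Pi.single_apply, mul_ite, mul_one, mul_zero]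
        rw [apply_ite (eval fun i => ((y i : ℝ) : ℂ))]
        simp [mul_comm]
      have hz : (∑ i, ev (pderiv i (p * X j)) y • cproj i)
          = ev p y • cproj j + (∑ i, ev (pderiv i p) y • cproj i).smulRight ((y j : ℝ) : ℂ) := by
        ext v
        simp only [ContinuousLinearMap.sum_apply, ContinuousLinearMap.smul_apply,
          ContinuousLinearMap.add_apply, ContinuousLinearMap.smulRight_apply, smul_eq_mul,
          cproj_apply]
        calc ∑ i, ev (pderiv i (p * X j)) y * (v i : ℂ)
            = ∑ i, ((if j = i then ev p y * (v i : ℂ) else 0)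
                + (y j : ℂ) * (ev (pderiv i p) y * (v i : ℂ))) := by
              refine Finset.sum_congr rfl fun i _ => ?_
              rw [key i]; split <;> ring
          _ = ev p y * (v j : ℂ) + (∑ i, ev (pderiv i p) y * (v i : ℂ)) * (y j : ℂ) := by
              rw [Finset.sum_add_distrib, Finset.sum_ite_eq, ← Finset.mul_sum]
              simp [mul_comm]
      rw [hfun, hz]
      exact h2

lemma ev_differentiable (p : MvPolynomial (Fin N) ℂ) : Differentiable ℝ (ev p) :=
  fun y => (ev_hasFDerivAt p y).differentiableAt

lemma pd_ev (i : Fin N) (p : MvPolynomial (Fin N) ℂ) : pd i (ev p) = ev (pderiv i p) := by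
  funext y
  rw [pd, (ev_hasFDerivAt p y).fderiv]
  simp only [ContinuousLinearMap.sum_apply, ContinuousLinearMap.smul_apply, cproj_apply,
    smul_eq_mul, EuclideanSpace.single_apply]
  rw [Finset.sum_congr rfl (g := fun j => if j = i then ev (pderiv j p) y else 0)
    (fun j _ => by split <;> simp [*])]
  simp

lemma degree_eq_sum (d : Fin N →₀ ℕ) : d.degree = ∑ i, d i :=
  Finset.sum_subset (Finset.subset_univ _) fun i _ hi => Finsupp.notMem_support_iff.mp hi

lemma hom_degree {p : MvPolynomial (Fin N) ℂ} {k : ℕ} (hp : p.IsHomogeneous k)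
    {d : Fin N →₀ ℕ} (hd : d ∈ p.support) : d.degree = k := by
  have := hp (MvPolynomial.mem_support_iff.mp hd)
  rwa [Finsupp.degree_eq_weight_one]

lemma degree_add' (x y : Fin N →₀ ℕ) : (x + y).degree = x.degree + y.degree := by
  simp only [degree_eq_sum, Finsupp.add_apply, Finset.sum_add_distrib]

lemma degree_single' (i : Fin N) : (Finsupp.single i 1 : Fin N →₀ ℕ).degree = 1 := by
  simp [degree_eq_sum, Finsupp.single_apply]

lemma sub_add_single {d : Fin N →₀ ℕ} {i : Fin N} (h : d i ≠ 0) :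
    d - Finsupp.single i 1 + Finsupp.single i 1 = d := by
  ext j
  rcases eq_or_ne j i with rfl | hij
  · simp only [Finsupp.add_apply, Finsupp.tsub_apply, Finsupp.single_eq_same]
    omega
  · simp [Finsupp.single_eq_of_ne' (Ne.symm hij)]

lemma degree_sub_single {d : Fin N →₀ ℕ} {i : Fin N} (h : d i ≠ 0) :
    (d - Finsupp.single i 1).degree + 1 = d.degree := by
  conv_rhs => rw [← sub_add_single h]
  rw [degree_add', degree_single']

lemma euler_monomial (d : Fin N →₀ ℕ) (a : ℂ) :
    ∑ i, X i * pderiv i (monomial d a) = ((d.degree : ℂ)) • monomial d a := by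
  have key : ∀ i : Fin N, X i * pderiv i (monomial d a) = monomial d (a * d i) := by
    intro i
    rw [pderiv_monomial]
    by_cases h : d i = 0
    · simp [h]
    · rw [X, monomial_mul, one_mul, add_comm, sub_add_single h]
  rw [Finset.sum_congr rfl fun i _ => key i]
  rw [← map_sum (monomial d), ← Finset.mul_sum, degree_eq_sum, smul_monomial]
  congr 1
  rw [smul_eq_mul]
  push_cast
  ring
lemma euler_poly {p : MvPolynomial (Fin N) ℂ} {k : ℕ} (hp : p.IsHomogeneous k) :
    ∑ i, X i * pderiv i p = (k : ℂ) • p := by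
  conv_lhs => rw [p.as_sum]
  conv_rhs => rw [p.as_sum]
  simp only [map_sum, Finset.mul_sum, Finset.smul_sum]
  rw [Finset.sum_comm]
  refine Finset.sum_congr rfl fun d hd => ?_
  rw [euler_monomial, hom_degree hp hd]

lemma hom_pderiv {p : MvPolynomial (Fin N) ℂ} {k : ℕ} (hp : p.IsHomogeneous k) (i : Fin N) :
    (pderiv i p).IsHomogeneous (k - 1) := by
  conv_lhs => rw [p.as_sum]
  rw [map_sum]
  refine IsHomogeneous.sum _ _ _ fun d hd => ?_
  rw [pderiv_monomial]
  by_cases h : d i = 0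
  · simp [h, isHomogeneous_zero]
  · refine isHomogeneous_monomial _ ?_
    have hdeg : d.degree = k := hom_degree hp hd
    have h1 := degree_sub_single h
    omega

def plap (p : MvPolynomial (Fin N) ℂ) : MvPolynomial (Fin N) ℂ :=
  -∑ i, pderiv i (pderiv i p)

lemma hom_plap {p : MvPolynomial (Fin N) ℂ} {k : ℕ} (hp : p.IsHomogeneous k) :
    (plap p).IsHomogeneous (k - 2) := by
  refine IsHomogeneous.neg ?_
  refine IsHomogeneous.sum _ _ _ fun i _ => ?_
  have := hom_pderiv (hom_pderiv hp i) i
  rwa [Nat.sub_sub] at this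

lemma hom0_pderiv {q : MvPolynomial (Fin N) ℂ} (hq : q.IsHomogeneous 0) (i : Fin N) :
    pderiv i q = 0 := by
  conv_lhs => rw [q.as_sum]
  rw [map_sum]
  refine Finset.sum_eq_zero fun d hd => ?_
  have : d.degree = 0 := hom_degree hq hd
  have hd0 : d = 0 := (Finsupp.degree_eq_zero_iff d).mp this
  subst hd0
  simp

lemma plap_zero : plap (0 : MvPolynomial (Fin N) ℂ) = 0 := by simp [plap]

lemma plap_iter_zero (t : ℕ) : plap^[t] (0 : MvPolynomial (Fin N) ℂ) = 0 :=
  Function.iterate_fixed plap_zero t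

lemma plap_iter_eq_zero : ∀ (t : ℕ) {r : ℕ} {q : MvPolynomial (Fin N) ℂ},
    q.IsHomogeneous r → r < 2*t → plap^[t] q = 0 := by
  intro t
  induction t with
  | zero => intro r q _ h; omega
  | succ t ih =>
      intro r q hq h
      rw [Function.iterate_succ_apply]
      by_cases hr : r < 2
      · have hpl : plap q = 0 := by
          rw [plap]
          rw [Finset.sum_congr rfl (g := fun _ => (0 : MvPolynomial (Fin N) ℂ))
            (fun i _ => ?_)]
          · simp
          · have h1 : (pderiv i q).IsHomogeneous 0 := by
              have := hom_pderiv hq i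
              have : r - 1 = 0 := by omega
              simpa [this] using hom_pderiv hq i
            rw [hom0_pderiv h1]
        rw [hpl, plap_iter_zero]
      · exact ih (hom_plap hq) (by omega)

lemma lap_step_ev (p : MvPolynomial (Fin N) ℂ) :
    (fun y => -(lap (ev p) y)) = ev (plap p) := by
  funext y
  simp only [lap, plap, pd_ev]
  simp [ev]

lemma negLapPow_ev (m : ℕ) (p : MvPolynomial (Fin N) ℂ) :
    negLapPow m (ev p) = ev (plap^[m] p) := by
  induction m with
  | zero => rfl
  | succ m ih =>
      show (fun g : Sp N → ℂ => fun y => -(lap g y))^[m+1] (ev p) = _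
      rw [Function.iterate_succ_apply']
      show (fun y => -(lap (negLapPow m (ev p)) y)) = _
      rw [ih, lap_step_ev, Function.iterate_succ_apply']

def iLP (m : ℕ) (q : MvPolynomial (Fin N) ℂ) : MvPolynomial (Fin N) ℂ :=
  Complex.I • plap^[m] q

lemma iLapIter_ev (m j : ℕ) (p : MvPolynomial (Fin N) ℂ) :
    iLapIter m j (ev p) = ev ((iLP m)^[j] p) := by
  induction j with
  | zero => rfl
  | succ j ih =>
      show (fun g : Sp N → ℂ => fun y => Complex.I * negLapPow m g y)^[j+1] (ev p) = _
      rw [Function.iterate_succ_apply']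
      show (fun y => Complex.I * negLapPow m (iLapIter m j (ev p)) y) = _
      rw [ih, negLapPow_ev, Function.iterate_succ_apply']
      funext y
      show Complex.I * ev (plap^[m] ((iLP m)^[j] p)) y = ev (iLP m ((iLP m)^[j] p)) y
      simp [iLP, ev, MvPolynomial.smul_eval]

lemma euler_ev (p : MvPolynomial (Fin N) ℂ) :
    euler (ev p) = ev (∑ i, X i * pderiv i p) := by
  funext y
  simp only [euler, pd_ev]
  simp [ev]

def plapL : MvPolynomial (Fin N) ℂ →ₗ[ℂ] MvPolynomial (Fin N) ℂ :=
  -∑ i, ((pderiv i).toLinearMap.comp (pderiv i).toLinearMap)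

lemma plap_eq_L (q : MvPolynomial (Fin N) ℂ) : plap q = plapL q := by
  simp [plap, plapL]

lemma plap_iter_eq_L (m : ℕ) (q : MvPolynomial (Fin N) ℂ) :
    plap^[m] q = (plapL ^ m) q := by
  rw [Module.End.pow_apply]
  have : plap (N := N) = ⇑plapL := funext plap_eq_L
  rw [this]

def EpL : MvPolynomial (Fin N) ℂ →ₗ[ℂ] MvPolynomial (Fin N) ℂ :=
  ∑ i, (LinearMap.mulLeft ℂ (X i)).comp (pderiv i).toLinearMap

lemma Ep_eq_L (q : MvPolynomial (Fin N) ℂ) : (∑ i, X i * pderiv i q) = EpL q := by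
  simp [EpL]

lemma hom_plap_iter (t : ℕ) {r : ℕ} {q : MvPolynomial (Fin N) ℂ} (hq : q.IsHomogeneous r) :
    (plap^[t] q).IsHomogeneous (r - 2*t) := by
  induction t generalizing r q with
  | zero => simpa using hq
  | succ t ih =>
      rw [Function.iterate_succ_apply]
      have := ih (hom_plap hq)
      have harith : r - 2 - 2*t = r - 2*(t+1) := by omega
      rwa [harith] at this

lemma hom_smul {q : MvPolynomial (Fin N) ℂ} {r : ℕ} (hq : q.IsHomogeneous r) (c : ℂ) :
    (c • q).IsHomogeneous r := by
  rw [← mem_homogeneousSubmodule] at hq ⊢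
  exact Submodule.smul_mem _ c hq

lemma scalar_id (c aj jj kk mm : ℂ) (hm : mm ≠ 0) :
    -(jj * c * aj) - 1/(2*mm) * (c * ((kk - 2*mm*jj) * aj)) = -(kk/(2*mm)) * (c * aj) := by
  field_simp
  ring

lemma master {m k : ℕ} (hm : 1 ≤ m) (p : MvPolynomial (Fin N) ℂ) (hp : p.IsHomogeneous k)
    (y : Sp N) :
    Bstar m (ev (∑ j ∈ Finset.range (k/(2*m)+1), ((Nat.factorial j : ℂ))⁻¹ • (iLP m)^[j] p)) y
      = -((k:ℂ)/(2*(m:ℂ))) *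
          ev (∑ j ∈ Finset.range (k/(2*m)+1), ((Nat.factorial j : ℂ))⁻¹ • (iLP m)^[j] p) y := by
  set J := k/(2*m) with hJ
  set Q : ℕ → MvPolynomial (Fin N) ℂ := fun j => (iLP m)^[j] p with hQdef
  have hQ : ∀ j, (Q j).IsHomogeneous (k - 2*m*j) := by
    intro j
    induction j with
    | zero => simpa [hQdef] using hp
    | succ j ih =>
        have heq : k - 2*m*j - 2*m = k - 2*m*(j+1) := by
          rw [Nat.sub_sub, Nat.mul_succ]
        have h1 : (plap^[m] (Q j)).IsHomogeneous (k - 2*m*(j+1)) := by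
          have h := hom_plap_iter m ih
          rwa [heq] at h
        have h2 : Q (j+1) = Complex.I • plap^[m] (Q j) := by
          rw [hQdef]
          simp only [Function.iterate_succ_apply']
          rfl
        rw [h2]
        exact hom_smul h1 _
  have h2m0 : 0 < 2*m := by omega
  have hrJ : k - 2*m*J < 2*m := by
    have h1 : 2*m*(k/(2*m)) + k % (2*m) = k := Nat.div_add_mod k (2*m)
    have h2 : k % (2*m) < 2*m := Nat.mod_lt _ h2m0
    rw [hJ]
    omega
  have hQJ1 : Q (J+1) = 0 := by
    have hz : plap^[m] (Q J) = 0 := plap_iter_eq_zero m (hQ J) hrJ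
    have h2 : Q (J+1) = Complex.I • plap^[m] (Q J) := by
      rw [hQdef]
      simp only [Function.iterate_succ_apply']
      rfl
    rw [h2, hz, smul_zero]
  have hle : ∀ j, j ≤ J → 2*m*j ≤ k := by
    intro j hj
    calc 2*m*j ≤ 2*m*J := Nat.mul_le_mul_left _ hj
      _ ≤ k := by rw [hJ, mul_comm]; exact Nat.div_mul_le_self k (2*m)
  set ψ : MvPolynomial (Fin N) ℂ :=
    ∑ j ∈ Finset.range (J+1), ((Nat.factorial j : ℂ))⁻¹ • Q j with hψ
  set a : ℕ → ℂ := fun j => ev (Q j) y with ha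
  set a' : ℕ → ℂ := fun j => ev (plap^[m] (Q j)) y with ha'
  have hIa : ∀ j, Complex.I * a' j = a (j+1) := by
    intro j
    rw [ha, ha']
    simp only [hQdef, Function.iterate_succ_apply']
    rw [show iLP m ((iLP m)^[j] p) = Complex.I • plap^[m] ((iLP m)^[j] p) from rfl]
    simp [ev, MvPolynomial.smul_eval]
  -- evaluate the three pieces
  have hev1 : negLapPow m (ev ψ) y = ∑ j ∈ Finset.range (J+1), ((Nat.factorial j : ℂ))⁻¹ * a' j := by
    rw [negLapPow_ev]
    rw [plap_iter_eq_L]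
    rw [hψ, map_sum]
    simp only [_root_.map_smul]
    simp [ev, MvPolynomial.smul_eval, ha', plap_iter_eq_L]
  have hev2 : euler (ev ψ) y
      = ∑ j ∈ Finset.range (J+1), ((Nat.factorial j : ℂ))⁻¹ * (((k:ℂ) - 2*m*j) * a j) := by
    rw [euler_ev, Ep_eq_L, hψ, map_sum]
    have : ∀ j ∈ Finset.range (J+1),
        EpL (((Nat.factorial j : ℂ))⁻¹ • Q j) = ((Nat.factorial j : ℂ))⁻¹ • (((k:ℂ) - 2*m*j) • Q j) := by
      intro j hj
      rw [_root_.map_smul]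
      congr 1
      rw [← Ep_eq_L, euler_poly (hQ j)]
      have : ((k - 2*m*j : ℕ) : ℂ) = (k:ℂ) - 2*m*j := by
        rw [Nat.cast_sub (hle j (by simpa [Nat.lt_succ_iff] using hj))]
        push_cast; ring
      rw [this]
    rw [Finset.sum_congr rfl this]
    simp [ev, MvPolynomial.smul_eval, ha]
  have hev3 : ev ψ y = ∑ j ∈ Finset.range (J+1), ((Nat.factorial j : ℂ))⁻¹ * a j := by
    rw [hψ]
    simp [ev, MvPolynomial.smul_eval, ha]
  rw [show Bstar m (ev ψ) y
      = -Complex.I * negLapPow m (ev ψ) y - (1/(2*(m:ℂ))) * euler (ev ψ) y from rfl]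
  rw [hev1, hev2, hev3]
  -- key reindexing identity
  have hkey : ∑ j ∈ Finset.range (J+1), ((Nat.factorial j : ℂ))⁻¹ * a (j+1)
      = ∑ j ∈ Finset.range (J+1), ((j:ℂ) * ((Nat.factorial j : ℂ))⁻¹) * a j := by
    rw [Finset.sum_range_succ, Finset.sum_range_succ']
    have haJ : a (J+1) = 0 := by
      show ev (Q (J+1)) y = 0
      rw [hQJ1]
      simp [ev]
    rw [haJ, mul_zero, add_zero]
    simp only [Nat.cast_zero, zero_mul, add_zero, Nat.factorial_zero]
    refine Finset.sum_congr rfl fun j _ => ?_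
    have hfac : ((Nat.factorial (j+1) : ℂ)) = ((j:ℂ)+1) * (Nat.factorial j : ℂ) := by
      rw [Nat.factorial_succ]; push_cast; ring
    have hne : (Nat.factorial j : ℂ) ≠ 0 := Nat.cast_ne_zero.mpr (Nat.factorial_ne_zero j)
    have hne1 : ((j:ℂ)+1) ≠ 0 := by
      have hcast : ((j:ℂ)+1) = ((j+1 : ℕ) : ℂ) := by push_cast; ring
      rw [hcast]
      exact Nat.cast_ne_zero.mpr (Nat.succ_ne_zero j)
    rw [hfac]
    field_simp
    push_cast; ring
  have hfirst : -Complex.I * ∑ j ∈ Finset.range (J+1), ((Nat.factorial j : ℂ))⁻¹ * a' j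
      = -∑ j ∈ Finset.range (J+1), ((j:ℂ) * ((Nat.factorial j : ℂ))⁻¹) * a j := by
    rw [← hkey, Finset.mul_sum, ← Finset.sum_neg_distrib]
    refine Finset.sum_congr rfl fun j _ => ?_
    rw [← hIa j]
    ring
  rw [hfirst, Finset.mul_sum, Finset.mul_sum]
  rw [← Finset.sum_neg_distrib, ← Finset.sum_sub_distrib]
  refine Finset.sum_congr rfl fun j _ => ?_
  have hmne : ((m:ℂ)) ≠ 0 := Nat.cast_ne_zero.mpr (by omega)
  exact scalar_id _ _ _ _ _ hmne

lemma iLP_smul (m : ℕ) (c : ℂ) (q : MvPolynomial (Fin N) ℂ) :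
    iLP m (c • q) = c • iLP m q := by
  rw [iLP, iLP, plap_iter_eq_L, plap_iter_eq_L, _root_.map_smul, smul_comm]

lemma iLP_iter_smul (m j : ℕ) (c : ℂ) (q : MvPolynomial (Fin N) ℂ) :
    (iLP m)^[j] (c • q) = c • (iLP m)^[j] q := by
  induction j with
  | zero => rfl
  | succ j ih => rw [Function.iterate_succ_apply', Function.iterate_succ_apply', ih, iLP_smul]

lemma ev_sum_pt (m : ℕ) (p : MvPolynomial (Fin N) ℂ) (J : ℕ) (z : Sp N) :
    ev (∑ j ∈ Finset.range (J+1), ((Nat.factorial j : ℂ))⁻¹ • (iLP m)^[j] p) z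
      = ∑ j ∈ Finset.range (J+1), ((Nat.factorial j : ℂ))⁻¹ * ev ((iLP m)^[j] p) z := by
  simp [ev, MvPolynomial.smul_eval]

end S8

/-- Lemma 4.1(i): for a homogeneous polynomial `P₀` of degree `k`,
`ψ = Σ_{j=0}^{⌊k/2m⌋} (1/j!)(i(-Δ)^m)^j P₀` satisfies `B* ψ = -(k/2m) ψ`; in particular the
generalized Hermite polynomials `ψ*_β` satisfy `B* ψ*_β = -(|β|/2m) ψ*_β`. -/
theorem stmt_8 (m N k : ℕ) (hm : 1 ≤ m) (hN : 1 ≤ N)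
    (P₀ : MvPolynomial (Fin N) ℂ) (hP : P₀.IsHomogeneous k) :
    (∀ y : Sp N,
      Bstar m (fun z : Sp N => ∑ j ∈ Finset.range (k/(2*m) + 1),
          (1/(Nat.factorial j : ℂ)) *
            iLapIter m j (fun w => MvPolynomial.eval (fun i => ((w i : ℝ) : ℂ)) P₀) z) y
        = -((k:ℂ)/(2*(m:ℂ))) * ∑ j ∈ Finset.range (k/(2*m) + 1),
            (1/(Nat.factorial j : ℂ)) *
              iLapIter m j (fun w => MvPolynomial.eval (fun i => ((w i : ℝ) : ℂ)) P₀) y)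
    ∧
    (∀ β : Fin N → ℕ, ∀ y : Sp N,
      Bstar m (fun z : Sp N =>
          (((Real.sqrt ((∏ i, Nat.factorial (β i) : ℕ) : ℝ) : ℝ) : ℂ))⁻¹ *
            (monom β z + ∑ j ∈ Finset.Icc 1 ((∑ i, β i)/(2*m)),
              (1/(Nat.factorial j : ℂ)) * iLapIter m j (monom β) z)) y
        = -((((∑ i, β i : ℕ)) : ℂ)/(2*(m:ℂ))) *
            ((((Real.sqrt ((∏ i, Nat.factorial (β i) : ℕ) : ℝ) : ℝ) : ℂ))⁻¹ *
              (monom β y + ∑ j ∈ Finset.Icc 1 ((∑ i, β i)/(2*m)),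
                (1/(Nat.factorial j : ℂ)) * iLapIter m j (monom β) y))) := by
  constructor
  · -- part 1
    set ψ : MvPolynomial (Fin N) ℂ :=
      ∑ j ∈ Finset.range (k/(2*m)+1), ((Nat.factorial j : ℂ))⁻¹ • (S8.iLP m)^[j] P₀ with hψ
    have hpt : ∀ z : Sp N,
        (∑ j ∈ Finset.range (k/(2*m) + 1),
          (1/(Nat.factorial j : ℂ)) * iLapIter m j (S8.ev P₀) z) = S8.ev ψ z := by
      intro z
      rw [hψ, S8.ev_sum_pt]
      refine Finset.sum_congr rfl fun j _ => ?_
      rw [S8.iLapIter_ev m j P₀, one_div]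
    intro y
    show Bstar m (fun z : Sp N => ∑ j ∈ Finset.range (k/(2*m) + 1),
          (1/(Nat.factorial j : ℂ)) * iLapIter m j (S8.ev P₀) z) y
        = -((k:ℂ)/(2*(m:ℂ))) * ∑ j ∈ Finset.range (k/(2*m) + 1),
            (1/(Nat.factorial j : ℂ)) * iLapIter m j (S8.ev P₀) y
    rw [show (fun z : Sp N => ∑ j ∈ Finset.range (k/(2*m) + 1),
          (1/(Nat.factorial j : ℂ)) * iLapIter m j (S8.ev P₀) z) = S8.ev ψ from funext hpt,
      hpt y]
    exact S8.master hm P₀ hP y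
  · -- part 2
    intro β y
    set c : ℂ := (((Real.sqrt ((∏ i, Nat.factorial (β i) : ℕ) : ℝ) : ℝ) : ℂ)) with hc
    set Pr : MvPolynomial (Fin N) ℂ := ∏ i, (MvPolynomial.X i) ^ (β i) with hPr
    set K : ℕ := ∑ i, β i with hK
    have hmon : monom β = S8.ev Pr := by
      funext z
      simp [monom, S8.ev, hPr]
    have homPr : Pr.IsHomogeneous K := by
      rw [hPr, hK]
      exact MvPolynomial.IsHomogeneous.prod _ _ _
        (fun i _ => MvPolynomial.isHomogeneous_X_pow i (β i))
    have hom2 : ((c⁻¹ : ℂ) • Pr).IsHomogeneous K := S8.hom_smul homPr _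
    set ψ2 : MvPolynomial (Fin N) ℂ :=
      ∑ j ∈ Finset.range (K/(2*m)+1), ((Nat.factorial j : ℂ))⁻¹ • (S8.iLP m)^[j] (c⁻¹ • Pr)
      with hψ2
    have hins : ∀ t : ℕ, Finset.range (t+1) = insert 0 (Finset.Icc 1 t) := by
      intro t
      ext x
      simp [Nat.lt_succ_iff]
      omega
    have hpt2 : ∀ z : Sp N,
        c⁻¹ * (monom β z + ∑ j ∈ Finset.Icc 1 (K/(2*m)),
            (1/(Nat.factorial j : ℂ)) * iLapIter m j (monom β) z) = S8.ev ψ2 z := by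
      intro z
      have hL : ∀ j : ℕ, (1/(Nat.factorial j : ℂ)) * iLapIter m j (monom β) z
          = ((Nat.factorial j : ℂ))⁻¹ * S8.ev ((S8.iLP m)^[j] Pr) z := by
        intro j
        rw [hmon, S8.iLapIter_ev, one_div]
      have hR : ∀ j : ℕ, ((Nat.factorial j : ℂ))⁻¹ * S8.ev ((S8.iLP m)^[j] (c⁻¹ • Pr)) z
          = ((Nat.factorial j : ℂ))⁻¹ * (c⁻¹ * S8.ev ((S8.iLP m)^[j] Pr) z) := by
        intro j
        rw [S8.iLP_iter_smul]
        simp [S8.ev, MvPolynomial.smul_eval]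
      rw [hψ2, S8.ev_sum_pt]
      rw [Finset.sum_congr rfl
        (g := fun j => ((Nat.factorial j : ℂ))⁻¹ * (c⁻¹ * S8.ev ((S8.iLP m)^[j] Pr) z))
        (fun j _ => hR j)]
      rw [Finset.sum_congr rfl
        (g := fun j => ((Nat.factorial j : ℂ))⁻¹ * S8.ev ((S8.iLP m)^[j] Pr) z)
        (fun j _ => hL j)]
      rw [hmon]
      rw [hins (K/(2*m)), Finset.sum_insert (by simp)]
      simp only [Function.iterate_zero, id_eq, Nat.factorial_zero, Nat.cast_one, inv_one, one_mul]
      rw [mul_add, Finset.mul_sum]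
      congr 1
      exact Finset.sum_congr rfl fun j _ => by ring
    show Bstar m (fun z : Sp N =>
          c⁻¹ * (monom β z + ∑ j ∈ Finset.Icc 1 (K/(2*m)),
            (1/(Nat.factorial j : ℂ)) * iLapIter m j (monom β) z)) y
        = -((K : ℂ)/(2*(m:ℂ))) *
            (c⁻¹ * (monom β y + ∑ j ∈ Finset.Icc 1 (K/(2*m)),
              (1/(Nat.factorial j : ℂ)) * iLapIter m j (monom β) y))
    rw [show (fun z : Sp N =>
          c⁻¹ * (monom β z + ∑ j ∈ Finset.Icc 1 (K/(2*m)),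
            (1/(Nat.factorial j : ℂ)) * iLapIter m j (monom β) z)) = S8.ev ψ2 from funext hpt2,
      hpt2 y]
    exact S8.master hm (c⁻¹ • Pr) hom2 y
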